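/- With A^n = the dg algebra k[x,y]-bar with |x|=0, |y|=1, dy=xⁿ as above, the homology of A^n is isomorphic as a graded vector space to ⨁_{a=1}^{n−1} k·z_a concentrated in degree 0, where z_a is the class of x^a. -/

import Mathlib

noncomputable section

/-- The underlying vector space of the dg algebra `Aⁿ = k̄[x,y]`, with basis indexed by
`Sum.inl a ↔ x^(a+1)` (degree 0) and `Sum.inr a ↔ x^a y` (degree 1). -/
abbrev A (k : Type*) [Field k] := (ℕ ⊕ ℕ) →₀ k

/-- `X k a` represents the monomial `x^(a+1)`. -/
def X (k : Type*) [Field k] (a : ℕ) : A k := Finsupp.single (Sum.inl a) 1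

/-- `Y k a` represents the monomial `x^a y`. -/
def Y (k : Type*) [Field k] (a : ℕ) : A k := Finsupp.single (Sum.inr a) 1

/-- Homological degree of the basis monomials. -/
def deg : ℕ ⊕ ℕ → ℕ
  | .inl _ => 0
  | .inr _ => 1

/-- Product of basis monomials of `Aⁿ`. -/
def muBasis (k : Type*) [Field k] : ℕ ⊕ ℕ → ℕ ⊕ ℕ → A k
  | .inl a, .inl b => X k (a + b + 1)
  | .inl a, .inr b => Y k (a + b + 1)
  | .inr a, .inl b => Y k (a + b + 1)
  | .inr _, .inr _ => 0

/-- The (bilinear) multiplication of `Aⁿ`. -/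
def mulA (k : Type*) [Field k] : A k →ₗ[k] A k →ₗ[k] A k :=
  Finsupp.lsum k fun i => LinearMap.toSpanSingleton k (A k →ₗ[k] A k)
    (Finsupp.lsum k fun j => LinearMap.toSpanSingleton k (A k) (muBasis k i j))

/-- Value of the differential on basis monomials: `d(x^(a+1)) = 0`, `d(x^a y) = x^(a+n)`. -/
def dBasis (k : Type*) [Field k] (n : ℕ) : ℕ ⊕ ℕ → A k
  | .inl _ => 0
  | .inr a => X k (a + n - 1)

/-- The differential of `Aⁿ`. -/
def dA (k : Type*) [Field k] (n : ℕ) : A k →ₗ[k] A k :=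
  Finsupp.lsum k fun i => LinearMap.toSpanSingleton k (A k) (dBasis k n i)

end

noncomputable section

/-- The homology of `Aⁿ` is isomorphic, as a graded vector space concentrated
in degree `0`, to `⨁_{a=1}^{n−1} k·z_a`, where `z_a` is the class of the degree-`0`
cycle `x^a` (here `X k a = x^(a+1)`, so `a : Fin (n-1)` corresponds to `z_(a+1)`). -/
theorem stmt_3 (k : Type) [Field k] [CharZero k] (n : ℕ) (hn : 1 ≤ n) :
    ∃ hmem : ∀ a : Fin (n - 1), X k (a : ℕ) ∈ LinearMap.ker (dA k n),
      ∃ e : (@HasQuotient.Quotient ↥(LinearMap.ker (dA k n))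
              (Submodule k ↥(LinearMap.ker (dA k n)))
              (Submodule.hasQuotient (R := k) (M := ↥(LinearMap.ker (dA k n))))
              ((LinearMap.range (dA k n)).comap (LinearMap.ker (dA k n)).subtype))
            ≃ₗ[k] (Fin (n - 1) →₀ k),
        ∀ a : Fin (n - 1),
          e (Submodule.Quotient.mk ⟨X k (a : ℕ), hmem a⟩) = Finsupp.single a 1 := by
  classical
  -- differential on basis elements
  have hd1 : ∀ (a : ℕ) (c : k), dA k n (Finsupp.single (Sum.inl a) c) = 0 := by
    intro a c
    simp [dA, Finsupp.lsum_single, dBasis]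
  have hd2 : ∀ (a : ℕ) (c : k),
      dA k n (Finsupp.single (Sum.inr a) c) = Finsupp.single (Sum.inl (a + (n - 1))) c := by
    intro a c
    have : a + n - 1 = a + (n - 1) := by omega
    simp [dA, Finsupp.lsum_single, dBasis, X, this, Finsupp.smul_single]
  -- evaluation of differential
  have hdval : ∀ (f : A k) (b : ℕ), b < n - 1 → dA k n f (Sum.inl b) = 0 := by
    intro f b hb
    rw [dA, Finsupp.lsum_apply, Finsupp.sum_apply, Finsupp.sum]
    apply Finset.sum_eq_zero
    intro i _
    rcases i with a | a
    · simp [Finsupp.lsum_single, dBasis]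
    · have : a + n - 1 ≠ b := by omega
      simp [dBasis, X, Finsupp.smul_single, Finsupp.single_apply, this]
  have hdval2 : ∀ (f : A k) (a : ℕ), dA k n f (Sum.inl (a + (n - 1))) = f (Sum.inr a) := by
    intro f a
    rw [dA, Finsupp.lsum_apply, Finsupp.sum_apply]
    rw [Finsupp.sum_eq_single (Sum.inr a)]
    · have : a + n - 1 = a + (n - 1) := by omega
      simp [dBasis, X, Finsupp.smul_single, Finsupp.single_apply, this]
    · intro i _ hi
      rcases i with b | b
      · simp [dBasis]
      · have : b + n - 1 ≠ a + (n - 1) := by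
          intro h; exact hi (by rw [show b = a by omega])
        simp [dBasis, X, Finsupp.smul_single, Finsupp.single_apply, this]
    · intro _; simp
  have hmem : ∀ a : Fin (n - 1), X k (a : ℕ) ∈ LinearMap.ker (dA k n) := by
    intro a
    rw [LinearMap.mem_ker, X]
    exact hd1 _ _
  refine ⟨hmem, ?_⟩
  -- f in kernel has no `inr` components
  have hkzero : ∀ f ∈ LinearMap.ker (dA k n), ∀ a : ℕ, f (Sum.inr a) = 0 := by
    intro f hf a
    rw [LinearMap.mem_ker] at hf
    rw [← hdval2 f a, hf]; rfl
  -- the projection φ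
  have injl : Function.Injective (fun a : Fin (n - 1) => (Sum.inl (a : ℕ) : ℕ ⊕ ℕ)) := by
    intro a b h
    simpa [Fin.ext_iff] using h
  set φ : A k →ₗ[k] (Fin (n - 1) →₀ k) := Finsupp.lcomapDomain _ injl with hφ
  have hφval : ∀ (f : A k) (b : Fin (n - 1)), φ f b = f (Sum.inl (b : ℕ)) := fun f b => rfl
  set ψ : ↥(LinearMap.ker (dA k n)) →ₗ[k] (Fin (n - 1) →₀ k) :=
    φ.comp (LinearMap.ker (dA k n)).subtype with hψ
  -- the section s
  set sB : ℕ ⊕ ℕ → A k := fun i => match i with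
    | Sum.inl b => if n - 1 ≤ b then Finsupp.single (Sum.inr (b - (n - 1))) (1 : k) else 0
    | Sum.inr _ => 0 with hsB
  set s : A k →ₗ[k] A k :=
    Finsupp.lsum k fun i => LinearMap.toSpanSingleton k (A k) (sB i) with hs
  have hrange : ∀ f ∈ LinearMap.ker (dA k n),
      (∀ b : ℕ, b < n - 1 → f (Sum.inl b) = 0) → f ∈ LinearMap.range (dA k n) := by
    intro f hf hb
    refine ⟨s f, ?_⟩
    have hsf : dA k n (s f) = Finsupp.sum f fun i c => dA k n (s (Finsupp.single i c)) := by
      conv_lhs => rw [← Finsupp.sum_single f]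
      rw [map_finsuppSum, map_finsuppSum]
    rw [hsf]
    conv_rhs => rw [← Finsupp.sum_single f]
    apply Finsupp.sum_congr
    intro i hi
    rcases i with b | a
    · have hble : n - 1 ≤ b := by
        by_contra h
        exact Finsupp.mem_support_iff.mp hi (hb b (by omega))
      have h1 : s (Finsupp.single (Sum.inl b) (f (Sum.inl b)))
          = Finsupp.single (Sum.inr (b - (n - 1))) (f (Sum.inl b)) := by
        simp [hs, Finsupp.lsum_single, hsB, if_pos hble, Finsupp.smul_single]
        intro h
        exact absurd h (by omega)
      rw [h1, hd2]
      congr 2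
      omega
    · exact absurd (hkzero f hf a) (Finsupp.mem_support_iff.mp hi)
  -- kernel of ψ equals the image submodule
  have hker_eq : (LinearMap.range (dA k n)).comap (LinearMap.ker (dA k n)).subtype
      = LinearMap.ker ψ := by
    ext x
    simp only [Submodule.mem_comap, LinearMap.mem_ker, LinearMap.mem_range,
      Submodule.coe_subtype, hψ, LinearMap.comp_apply]
    constructor
    · rintro ⟨g, hg⟩
      ext b
      rw [hφval, ← hg]
      exact hdval g b b.2
    · intro h
      apply hrange _ x.2
      intro b hb
      have := congrArg (fun g => g (⟨b, hb⟩ : Fin (n - 1))) h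
      simpa [hφval] using this
  -- surjectivity of ψ
  have hsurj : Function.Surjective ψ := by
    intro g
    have hker : Finsupp.mapDomain (fun a : Fin (n - 1) => (Sum.inl (a : ℕ) : ℕ ⊕ ℕ)) g
        ∈ LinearMap.ker (dA k n) := by
      rw [LinearMap.mem_ker, Finsupp.mapDomain, map_finsuppSum, Finsupp.sum]
      exact Finset.sum_eq_zero fun a _ => hd1 _ _
    refine ⟨⟨_, hker⟩, ?_⟩
    ext b
    rw [hψ]
    simp only [LinearMap.comp_apply, Submodule.coe_subtype]
    rw [hφval]
    exact Finsupp.mapDomain_apply injl g b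
  refine ⟨(Submodule.quotEquivOfEq _ _ hker_eq).trans (ψ.quotKerEquivOfSurjective hsurj), ?_⟩
  intro a
  have h1 : ((Submodule.quotEquivOfEq _ _ hker_eq).trans (ψ.quotKerEquivOfSurjective hsurj))
      (Submodule.Quotient.mk (⟨X k (a : ℕ), hmem a⟩ : ↥(LinearMap.ker (dA k n))))
        = ψ ⟨X k (a : ℕ), hmem a⟩ := rfl
  rw [h1]
  ext b
  rw [hψ]
  simp only [LinearMap.comp_apply, Submodule.coe_subtype]
  rw [hφval]
  simp [X, Finsupp.single_apply, Fin.ext_iff]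

end
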